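/- There exist real constants a₁ ≥ a₂ > 0 such that the following holds. Let m = f_k be a Fibonacci number with k ≥ 2, let n be a positive integer divisible by m, and let L be the scaled Fibonacci lattice L = {((n/m)·i, (n/m)·(i·f_{k−1} mod m)) : i = 0, 1, …, m−1} ⊆ ℝ². Then for every α > 0, every axis-aligned rectangle R contained in [0, n − n/m] × [0, n − n/m] whose area equals α·n²/m contains at least ⌊α/a₁⌋ and at most ⌈α/a₂⌉ points of L. -/

import Mathlib

open Nat (fib)

lemma fibL1 (a b : ℕ) :
    (fib (a+b) * fib (a+1) : ℤ) = fib (a+b+1) * fib a + (-1)^a * fib b := by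
  induction a with
  | zero => simp
  | succ a ih =>
    have e1 : (fib (a+2) : ℤ) = fib a + fib (a+1) := by
      rw [Nat.fib_add_two]; push_cast; ring
    have e2 : (fib (a+b+2) : ℤ) = fib (a+b) + fib (a+b+1) := by
      rw [Nat.fib_add_two]; push_cast; ring
    have h3 : a + 1 + b = a + b + 1 := by omega
    rw [h3, show a+b+1+1 = a+b+2 from rfl, show a+1+1 = a+2 from rfl, e1, e2]
    linear_combination -ih

lemma fib3 (i t : ℕ) : fib (i+t+2) ≤ 3 * (fib (i+1) * fib (t+1)) := by
  have h := Nat.fib_add (i+1) t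
  have h1 : fib t ≤ fib (t+1) := Nat.fib_le_fib_succ
  have h2 : fib (i+2) ≤ 2 * fib (i+1) := by
    rw [Nat.fib_add_two]; have : fib i ≤ fib (i+1) := Nat.fib_le_fib_succ; omega
  have : i + 1 + t + 1 = i + t + 2 := by omega
  rw [this] at h
  nlinarith [Nat.fib_pos.mpr (show 0 < i+1 by omega)]

lemma fibInterval (k u : ℕ) (h1 : 1 ≤ u) (h2 : u < fib k) :
    ∃ j, 1 ≤ j ∧ j + 2 ≤ k ∧ fib (j+1) ≤ u ∧ u < fib (j+2) := by
  induction k with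
  | zero => simp at h2
  | succ k ih =>
    by_cases hc : u < fib k
    · obtain ⟨j, hj⟩ := ih hc
      exact ⟨j, hj.1, by omega, hj.2.2⟩
    · push_neg at hc
      have hk2 : 2 ≤ k := by
        by_contra hk
        interval_cases k <;> simp_all <;> omega
      refine ⟨k - 1, by omega, by omega, ?_, ?_⟩
      · rwa [show k - 1 + 1 = k by omega]
      · rwa [show k - 1 + 2 = k + 1 by omega]

lemma gap (k : ℕ) (a b : ℤ) (hdvd : (fib k : ℤ) ∣ (b - a * fib (k-1)))
    (ha1 : a ≠ 0) (ha2 : |a| < fib k) (hb2 : |b| < fib k) :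
    (fib k : ℤ) ≤ 3 * |a| * |b| := by
  have hk0 : 1 ≤ k := by
    by_contra h
    have : k = 0 := by omega
    subst this
    norm_num [Nat.fib_zero] at ha2
    linarith [abs_nonneg a]
  -- b ≠ 0
  have hcop : IsCoprime (fib k : ℤ) (fib (k-1) : ℤ) := by
    rw [Int.isCoprime_iff_gcd_eq_one]
    have := Nat.fib_coprime_fib_succ (k-1)
    rw [show k - 1 + 1 = k by omega] at this
    simpa [Int.gcd_natCast_natCast] using (Nat.coprime_comm.mp this)
  have hb0 : b ≠ 0 := by
    rintro rfl
    have h1 : (fib k : ℤ) ∣ a * fib (k-1) := by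
      have := hdvd.neg_right
      simpa using this
    have hda : (fib k : ℤ) ∣ a := hcop.dvd_of_dvd_mul_right h1
    have := Int.le_of_dvd (abs_pos.mpr ha1) ((dvd_abs _ _).mpr hda)
    omega
  have hu1 : 1 ≤ a.natAbs := by omega
  have habs : (a.natAbs : ℤ) = |a| := (Int.abs_eq_natAbs a).symm
  have hu2 : a.natAbs < fib k := by omega
  obtain ⟨j, hj1, hjk, hjle, hjlt⟩ := fibInterval k a.natAbs hu1 hu2
  obtain ⟨i, rfl⟩ : ∃ i, j = i + 1 := ⟨j - 1, by omega⟩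
  obtain ⟨t, rfl⟩ : ∃ t, k = i + t + 3 := ⟨k - (i + 3), by omega⟩
  obtain ⟨d, hd⟩ := hdvd
  rw [show i + t + 3 - 1 = i + t + 2 by omega] at hd
  have hd' : b = a * fib (i+t+2) + fib (i+t+3) * d := by linarith
  set ε : ℤ := (-1)^(i+1) with hεdef
  have hε2 : ε * ε = 1 := by rw [hεdef, ← mul_pow]; norm_num
  have hεpm : ε = 1 ∨ ε = -1 := by
    rcases Nat.even_or_odd (i+1) with h | h
    · exact Or.inl (Even.neg_one_pow h)
    · exact Or.inr (Odd.neg_one_pow h)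
  have idC : (fib (i+2) * fib (i+2) : ℤ) = fib (i+3) * fib (i+1) + ε := by
    have := fibL1 (i+1) 1
    rw [show i+1+1 = i+2 by omega] at this
    simpa using this
  have A1 : (fib (i+t+2) : ℤ) = fib (i+1) * fib t + fib (i+2) * fib (t+1) := by
    have := Nat.fib_add (i+1) t
    rw [show i+1+t+1 = i+t+2 by omega] at this
    exact_mod_cast this
  have A2 : (fib (i+t+3) : ℤ) = fib (i+2) * fib t + fib (i+3) * fib (t+1) := by
    have := Nat.fib_add (i+2) t
    rw [show i+2+t+1 = i+t+3 by omega] at this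
    exact_mod_cast this
  set σ : ℤ := ε * (a * fib (i+2) + d * fib (i+3)) with hσdef
  set τ : ℤ := -ε * (a * fib (i+1) + d * fib (i+2)) with hτdef
  have eq_a : a = σ * fib (i+2) + τ * fib (i+3) := by
    rw [hσdef, hτdef]
    linear_combination (-ε*a) * idC + (-a) * hε2
  have eq_b : b = ε * (σ * fib (t+1) - τ * fib t) := by
    rw [hσdef, hτdef]
    linear_combination hd' + a * A1 + d * A2
      - (a*((fib (i+2):ℤ)*fib (t+1) + fib (i+1)*fib t)
         + d*((fib (i+3):ℤ)*fib (t+1) + fib (i+2)*fib t)) * hε2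
  -- numeric facts
  have hP0 : (0:ℤ) ≤ (fib (i+1) : ℤ) := by positivity
  have hP : (1:ℤ) ≤ (fib (i+2) : ℤ) := by
    exact_mod_cast Nat.one_le_iff_ne_zero.mpr (Nat.fib_pos.mpr (by omega)).ne'
  have hP' : (1:ℤ) ≤ (fib (i+3) : ℤ) := by
    exact_mod_cast Nat.one_le_iff_ne_zero.mpr (Nat.fib_pos.mpr (by omega)).ne'
  have hS : (1:ℤ) ≤ (fib (t+1) : ℤ) := by
    exact_mod_cast Nat.one_le_iff_ne_zero.mpr (Nat.fib_pos.mpr (by omega)).ne'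
  have hS' : (0:ℤ) ≤ (fib t : ℤ) := by positivity
  have h3 : (fib (i+t+3) : ℤ) ≤ 3 * (fib (i+2) * fib (t+1)) := by
    have := fib3 (i+1) t
    rw [show i+1+t+2 = i+t+3 by omega] at this
    exact_mod_cast this
  have haP : (fib (i+2) : ℤ) ≤ |a| := by
    have : (fib (i+2) : ℤ) ≤ (a.natAbs : ℤ) := by exact_mod_cast hjle
    omega
  have haP' : |a| < (fib (i+3) : ℤ) := by
    have : (a.natAbs : ℤ) < (fib (i+3) : ℤ) := by exact_mod_cast hjlt
    omega
  have habsb : |b| = |σ * fib (t+1) - τ * fib t| := by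
    rcases hεpm with h | h
    · rw [eq_b, h, one_mul]
    · rw [eq_b, h, neg_one_mul, abs_neg]
  rcases eq_or_ne τ 0 with hτ0 | hτ0
  · rw [hτ0] at eq_a habsb
    simp only [zero_mul, add_zero, sub_zero] at eq_a habsb
    have hσ0 : σ ≠ 0 := by
      rintro h; rw [h, zero_mul] at eq_a; exact ha1 eq_a
    have h1 : 1 ≤ |σ| := Int.one_le_abs hσ0
    have e1 : |a| = |σ| * fib (i+2) := by
      rw [eq_a, abs_mul, abs_of_nonneg (by positivity : (0:ℤ) ≤ (fib (i+2):ℤ))]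
    have e2 : |b| = |σ| * fib (t+1) := by
      rw [habsb, abs_mul, abs_of_nonneg (by positivity : (0:ℤ) ≤ (fib (t+1):ℤ))]
    rw [e1, e2]
    have hσσ : 1 ≤ |σ| * |σ| := one_le_mul_of_one_le_of_one_le h1 h1
    calc (fib (i+t+3) : ℤ) ≤ 3 * ((fib (i+2):ℤ) * fib (t+1)) := h3
      _ ≤ (|σ| * |σ|) * (3 * ((fib (i+2):ℤ) * fib (t+1))) :=
          le_mul_of_one_le_left (by positivity) hσσ
      _ = 3 * (|σ| * fib (i+2)) * (|σ| * fib (t+1)) := by ring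
  · have hσ0 : σ ≠ 0 := by
      rintro h
      rw [h, zero_mul, zero_add] at eq_a
      have h1 : 1 ≤ |τ| := Int.one_le_abs hτ0
      have e1 : |a| = |τ| * fib (i+3) := by
        rw [eq_a, abs_mul, abs_of_nonneg (by positivity : (0:ℤ) ≤ (fib (i+3):ℤ))]
      have : (fib (i+3):ℤ) ≤ |τ| * fib (i+3) := le_mul_of_one_le_left (by positivity) h1
      linarith
    have h1σ : 1 ≤ |σ| := Int.one_le_abs hσ0
    have h1τ : 1 ≤ |τ| := Int.one_le_abs hτ0
    have hsign : σ * τ < 0 := by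
      rcases lt_trichotomy σ 0 with hs | hs | hs
      · rcases lt_trichotomy τ 0 with htt | htt | htt
        · exfalso
          have e1 : (fib (i+2):ℤ) ≤ (-σ) * fib (i+2) :=
            le_mul_of_one_le_left (by positivity) (by omega)
          have e2 : (fib (i+3):ℤ) ≤ (-τ) * fib (i+3) :=
            le_mul_of_one_le_left (by positivity) (by omega)
          have h4 : (fib (i+2):ℤ) + fib (i+3) ≤ -a := by
            rw [eq_a]; linarith
          linarith [neg_le_abs a]
        · exact absurd htt hτ0
        · exact mul_neg_of_neg_of_pos hs htt
      · exact absurd hs hσ0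
      · rcases lt_trichotomy τ 0 with htt | htt | htt
        · exact mul_neg_of_pos_of_neg hs htt
        · exact absurd htt hτ0
        · exfalso
          have e1 : (fib (i+2):ℤ) ≤ σ * fib (i+2) :=
            le_mul_of_one_le_left (by positivity) (by omega)
          have e2 : (fib (i+3):ℤ) ≤ τ * fib (i+3) :=
            le_mul_of_one_le_left (by positivity) (by omega)
          have h4 : (fib (i+2):ℤ) + fib (i+3) ≤ a := by
            rw [eq_a]; linarith
          linarith [le_abs_self a]
    have hBb : (fib (t+1) : ℤ) + fib t ≤ |b| := by
      rw [habsb]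
      rcases lt_trichotomy σ 0 with hs | hs | hs
      · have htt : 0 < τ := by
          rcases lt_trichotomy τ 0 with h' | h' | h'
          · exfalso; exact absurd (mul_pos_of_neg_of_neg hs h') (by linarith)
          · exact absurd h' hτ0
          · exact h'
        have e1 : (fib (t+1):ℤ) ≤ (-σ) * fib (t+1) :=
          le_mul_of_one_le_left (by positivity) (by omega)
        have e2 : (fib t:ℤ) ≤ τ * fib t := le_mul_of_one_le_left (by positivity) (by omega)
        have : -(σ * fib (t+1) - τ * fib t) ≤ |σ * fib (t+1) - τ * fib t| := neg_le_abs _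
        linarith
      · exact absurd hs hσ0
      · have htt : τ < 0 := by
          rcases lt_trichotomy τ 0 with h' | h' | h'
          · exact h'
          · exact absurd h' hτ0
          · exfalso; exact absurd (mul_pos hs h') (by linarith)
        have e1 : (fib (t+1):ℤ) ≤ σ * fib (t+1) :=
          le_mul_of_one_le_left (by positivity) (by omega)
        have e2 : (fib t:ℤ) ≤ (-τ) * fib t := le_mul_of_one_le_left (by positivity) (by omega)
        have : σ * fib (t+1) - τ * fib t ≤ |σ * fib (t+1) - τ * fib t| := le_abs_self _
        linarith
    calc (fib (i+t+3) : ℤ) ≤ 3 * ((fib (i+2):ℤ) * fib (t+1)) := h3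
      _ ≤ 3 * (|a| * ((fib (t+1):ℤ) + fib t)) := by
          have hfib : ((fib (t+1):ℤ)) ≤ (fib (t+1):ℤ) + fib t := by linarith
          have := mul_le_mul haP hfib (by positivity) (abs_nonneg a)
          linarith
      _ ≤ 3 * (|a| * |b|) := by
          have := mul_le_mul_of_nonneg_left hBb (abs_nonneg a)
          linarith
      _ = 3 * |a| * |b| := by ring

lemma cover0 (m c : ℤ) (hm : 0 < m) (P P' S S' : ℤ)
    (hP : 0 ≤ P) (hP' : 0 ≤ P') (hS : 0 ≤ S) (hS' : 0 ≤ S')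
    (hdet : P * S' + P' * S = m)
    (he : m ∣ (-S - P * c)) (hf : m ∣ (S' - P' * c))
    (A B U V : ℝ) (hU1 : (P:ℝ) ≤ U) (hU2 : (P':ℝ) ≤ U) (hV : ((S:ℝ) + (S':ℝ)) ≤ V) :
    ∃ x y : ℤ, m ∣ (y - x * c) ∧ A ≤ (x:ℝ) ∧ (x:ℝ) ≤ A + U ∧ B ≤ (y:ℝ) ∧ (y:ℝ) ≤ B + V := by
  have hmR : (0:ℝ) < (m:ℝ) := by exact_mod_cast hm
  have hdetR : (P:ℝ) * S' + (P':ℝ) * S = m := by exact_mod_cast hdet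
  set Px : ℝ := A + U with hPx
  set Py : ℝ := B + V - S with hPy
  set c₁ : ℝ := (Px * S' - Py * P') / m with hc₁
  set c₂ : ℝ := (Px * S + Py * P) / m with hc₂
  have key1 : c₁ * P + c₂ * P' = Px := by
    rw [hc₁, hc₂, div_mul_eq_mul_div, div_mul_eq_mul_div, ← add_div,
      div_eq_iff hmR.ne']
    linear_combination Px * hdetR
  have key2 : -(c₁ * S) + c₂ * S' = Py := by
    rw [hc₁, hc₂, div_mul_eq_mul_div, div_mul_eq_mul_div, ← neg_div,
      ← add_div, div_eq_iff hmR.ne']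
    linear_combination Py * hdetR
  set σ : ℤ := ⌊c₁⌋ with hσ
  set τ : ℤ := ⌊c₂⌋ with hτ
  have l1 : (σ:ℝ) ≤ c₁ := Int.floor_le c₁
  have l2 : c₁ ≤ (σ:ℝ) + 1 := (Int.lt_floor_add_one c₁).le
  have l3 : (τ:ℝ) ≤ c₂ := Int.floor_le c₂
  have l4 : c₂ ≤ (τ:ℝ) + 1 := (Int.lt_floor_add_one c₂).le
  have hPR : (0:ℝ) ≤ (P:ℝ) := by exact_mod_cast hP
  have hP'R : (0:ℝ) ≤ (P':ℝ) := by exact_mod_cast hP'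
  have hSR : (0:ℝ) ≤ (S:ℝ) := by exact_mod_cast hS
  have hS'R : (0:ℝ) ≤ (S':ℝ) := by exact_mod_cast hS'
  have b1 : 0 ≤ (c₁ - σ) * (P:ℝ) := mul_nonneg (by linarith) hPR
  have b2 : (c₁ - σ) * (P:ℝ) ≤ P := mul_le_of_le_one_left hPR (by linarith)
  have b3 : 0 ≤ (c₂ - τ) * (P':ℝ) := mul_nonneg (by linarith) hP'R
  have b4 : (c₂ - τ) * (P':ℝ) ≤ P' := mul_le_of_le_one_left hP'R (by linarith)
  have b5 : 0 ≤ (c₁ - σ) * (S:ℝ) := mul_nonneg (by linarith) hSR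
  have b6 : (c₁ - σ) * (S:ℝ) ≤ S := mul_le_of_le_one_left hSR (by linarith)
  have b7 : 0 ≤ (c₂ - τ) * (S':ℝ) := mul_nonneg (by linarith) hS'R
  have b8 : (c₂ - τ) * (S':ℝ) ≤ S' := mul_le_of_le_one_left hS'R (by linarith)
  have hgx : ((σ * P + τ * P' : ℤ) : ℝ) = Px - ((c₁ - σ)*(P:ℝ) + (c₂ - τ)*(P':ℝ)) := by
    push_cast; linear_combination key1
  have hgy : ((-(σ*S) + τ*S' : ℤ):ℝ) = Py + (c₁ - σ)*(S:ℝ) - (c₂ - τ)*(S':ℝ) := by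
    push_cast; linear_combination key2
  have dvdgen : ∀ u v : ℤ, m ∣ ((-(u*S) + v*S') - (u*P + v*P')*c) := by
    intro u v
    have h : ((-(u*S) + v*S') - (u*P + v*P')*c) = u*(-S - P*c) + v*(S' - P'*c) := by ring
    rw [h]
    exact dvd_add (he.mul_left u) (hf.mul_left v)
  by_cases hx : A ≤ ((σ * P + τ * P' : ℤ) : ℝ)
  · refine ⟨σ * P + τ * P', -(σ*S) + τ*S', dvdgen σ τ, hx, ?_, ?_, ?_⟩
    · rw [hgx]; rw [hPx] at *; linarith
    · rw [hgy]; rw [hPy] at *; linarith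
    · rw [hgy]; rw [hPy] at *; linarith
  · push_neg at hx
    push_cast at hx
    by_cases hy : ((-(σ*S) + τ*S' : ℤ):ℝ) + (S':ℝ) ≤ B + V
    · -- use g + f = ((σ)*P + (τ+1)*P', -(σ*S) + (τ+1)*S')
      push_cast at hy
      refine ⟨σ * P + (τ+1) * P', -(σ*S) + (τ+1)*S', dvdgen σ (τ+1), ?_, ?_, ?_, ?_⟩
      · push_cast
        push_cast at hgx
        rw [hPx] at *
        linarith
      · push_cast
        push_cast at hgx
        rw [hPx] at *
        linarith
      · push_cast
        push_cast at hgy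
        rw [hPy] at *
        linarith
      · push_cast at hy ⊢
        linarith
    · push_neg at hy
      push_cast at hy
      -- use g + e = ((σ+1)*P + τ*P', -((σ+1)*S) + τ*S')
      refine ⟨(σ+1) * P + τ * P', -((σ+1)*S) + τ*S', dvdgen (σ+1) τ, ?_, ?_, ?_, ?_⟩
      · push_cast
        push_cast at hgx
        rw [hPx] at *
        linarith
      · push_cast
        push_cast at hgx
        rw [hPx] at *
        linarith
      · push_cast at hy ⊢
        push_cast at hgy
        rw [hPy] at *
        linarith
      · push_cast
        push_cast at hgy
        rw [hPy] at *
        linarith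

lemma cover (k i t : ℕ) (hk : k = i + t + 2) (A B U V : ℝ)
    (hU : (fib (i+2) : ℝ) ≤ U) (hV : (fib (t+2) : ℝ) ≤ V) :
    ∃ x y : ℤ, (fib k : ℤ) ∣ (y - x * fib (k-1)) ∧
      A ≤ (x:ℝ) ∧ (x:ℝ) ≤ A + U ∧ B ≤ (y:ℝ) ∧ (y:ℝ) ≤ B + V := by
  subst hk
  rw [show i + t + 2 - 1 = i + t + 1 by omega]
  have hm : (0:ℤ) < fib (i+t+2) := by
    exact_mod_cast Nat.fib_pos.mpr (by omega)
  have I1 : (fib (i+t+1) * fib (i+1) : ℤ) = fib (i+t+2) * fib i + (-1)^i * fib (t+1) := by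
    have := fibL1 i (t+1)
    rw [show i + (t+1) = i+t+1 by omega] at this
    convert this using 3
  have I2 : (fib (i+t+1) * fib (i+2) : ℤ)
      = fib (i+t+2) * fib (i+1) + (-1)^(i+1) * fib t := by
    have := fibL1 (i+1) t
    rw [show i+1+t = i+t+1 by omega] at this
    convert this using 3
  have hdet : (fib (i+2) : ℤ) * fib (t+1) + (fib (i+1) : ℤ) * fib t = fib (i+t+2) := by
    have := Nat.fib_add (i+1) t
    rw [show i+1+t+1 = i+t+2 by omega] at this
    push_cast [this]; ring
  have hfle : (fib (i+1) : ℝ) ≤ fib (i+2) := by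
    exact_mod_cast Nat.fib_le_fib_succ
  have hVs : ((fib (t+1) : ℝ)) + (fib t : ℝ) ≤ V := by
    have : (fib (t+2) : ℝ) = fib (t+1) + fib t := by
      rw [Nat.fib_add_two]; push_cast; ring
    linarith
  rcases Nat.even_or_odd i with hpar | hpar
  · -- i even : (-1)^i = 1
    have hp : ((-1:ℤ))^i = 1 := Even.neg_one_pow hpar
    rw [hp, one_mul] at I1
    have hp2 : ((-1:ℤ))^(i+1) = -1 := Odd.neg_one_pow (Even.add_one hpar)
    rw [hp2] at I2
    refine cover0 (fib (i+t+2)) (fib (i+t+1)) hm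
      (fib (i+2)) (fib (i+1)) (fib t) (fib (t+1))
      (by positivity) (by positivity) (by positivity) (by positivity)
      (by linarith [hdet] : (fib (i+2):ℤ) * fib (t+1) + (fib (i+1):ℤ) * fib t = fib (i+t+2))
      ⟨-(fib (i+1)), by linarith⟩ ⟨-(fib i), by linarith⟩
      A B U V (by push_cast; linarith) (by push_cast; linarith) (by push_cast; linarith)
  · have hp : ((-1:ℤ))^i = -1 := Odd.neg_one_pow hpar
    rw [hp] at I1
    have hp2 : ((-1:ℤ))^(i+1) = 1 := Even.neg_one_pow (Odd.add_one hpar)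
    rw [hp2, one_mul] at I2
    refine cover0 (fib (i+t+2)) (fib (i+t+1)) hm
      (fib (i+1)) (fib (i+2)) (fib (t+1)) (fib t)
      (by positivity) (by positivity) (by positivity) (by positivity)
      (by linarith [hdet] : (fib (i+1):ℤ) * fib t + (fib (i+2):ℤ) * fib (t+1) = fib (i+t+2))
      ⟨-(fib i), by linarith⟩ ⟨-(fib (i+1)), by linarith⟩
      A B U V (by push_cast; linarith) (by push_cast; linarith) (by push_cast; linarith)

/-- The number of points of the scaled Fibonacci lattice
`{((n/m)·i, (n/m)·(i·f_{k−1} mod m)) : i = 0, …, m−1}` (with `m = f_k`) lying in the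
axis-aligned rectangle `[x₁, x₂] × [y₁, y₂]`. -/
noncomputable def fibLatticeCount (k m n : ℕ) (x₁ x₂ y₁ y₂ : ℝ) : ℕ :=
  ((Finset.range m).filter (fun i : ℕ =>
    x₁ ≤ (n : ℝ) / m * (i : ℝ) ∧ (n : ℝ) / m * (i : ℝ) ≤ x₂ ∧
    y₁ ≤ (n : ℝ) / m * (((i * Nat.fib (k - 1)) % m : ℕ) : ℝ) ∧
    (n : ℝ) / m * (((i * Nat.fib (k - 1)) % m : ℕ) : ℝ) ≤ y₂)).card


set_option maxHeartbeats 2000000 in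
theorem stmt8 :
    ∃ a₁ a₂ : ℝ, a₂ ≤ a₁ ∧ 0 < a₂ ∧
      ∀ k m n : ℕ, 2 ≤ k → m = Nat.fib k → 0 < n → m ∣ n →
        ∀ α : ℝ, 0 < α →
          ∀ x₁ x₂ y₁ y₂ : ℝ, x₁ ≤ x₂ → y₁ ≤ y₂ →
            0 ≤ x₁ → x₂ ≤ (n : ℝ) - (n : ℝ) / m →
            0 ≤ y₁ → y₂ ≤ (n : ℝ) - (n : ℝ) / m →
            (x₂ - x₁) * (y₂ - y₁) = α * (n : ℝ)^2 / m →
            ⌊α / a₁⌋₊ ≤ fibLatticeCount k m n x₁ x₂ y₁ y₂ ∧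
              fibLatticeCount k m n x₁ x₂ y₁ y₂ ≤ ⌈α / a₂⌉₊ := by
  refine ⟨4, 1/6, by norm_num, by norm_num, ?_⟩
  intro k m n hk2 hmfib hn hmn α hα x₁ x₂ y₁ y₂ hx12 hy12 hx1 hx2 hy1 hy2 harea
  have hm1 : 1 ≤ m := by
    rw [hmfib]; exact Nat.fib_pos.mpr (by omega)
  have hmR : (0:ℝ) < m := by exact_mod_cast hm1
  have hnR : (0:ℝ) < n := by exact_mod_cast hn
  set ν : ℝ := (n:ℝ)/m with hν
  have hν0 : 0 < ν := div_pos hnR hmR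
  have hνm : ν * m = n := by rw [hν]; field_simp
  set A : ℝ := x₁ / ν with hA
  set A' : ℝ := x₂ / ν with hA'
  set B : ℝ := y₁ / ν with hB
  set B' : ℝ := y₂ / ν with hB'
  have gen1 : ∀ c z : ℝ, (c ≤ ν * z ↔ c / ν ≤ z) := by
    intro c z; rw [div_le_iff₀ hν0, mul_comm]
  have gen2 : ∀ c z : ℝ, (ν * z ≤ c ↔ z ≤ c / ν) := by
    intro c z; rw [le_div_iff₀ hν0, mul_comm]
  set yc : ℕ → ℕ := fun i => (i * fib (k - 1)) % m with hyc
  set T : Finset ℕ := (Finset.range m).filter (fun i : ℕ =>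
      A ≤ (i:ℝ) ∧ (i:ℝ) ≤ A' ∧ B ≤ (yc i : ℝ) ∧ (yc i : ℝ) ≤ B') with hT
  have hcount : fibLatticeCount k m n x₁ x₂ y₁ y₂ = T.card := by
    rw [hT, fibLatticeCount]
    congr 1
    apply Finset.filter_congr
    intro i _
    exact and_congr (gen1 _ _) (and_congr (gen2 _ _) (and_congr (gen1 _ _) (gen2 _ _)))
  -- basic bounds
  have hA0 : 0 ≤ A := div_nonneg hx1 hν0.le
  have hB0 : 0 ≤ B := div_nonneg hy1 hν0.le
  have hA'le : A' ≤ (m:ℝ) - 1 := by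
    rw [hA', div_le_iff₀ hν0]
    linarith [hνm, hx2]
  have hB'le : B' ≤ (m:ℝ) - 1 := by
    rw [hB', div_le_iff₀ hν0]
    linarith [hνm, hy2]
  have hAA' : A ≤ A' := by
    rw [hA, hA', div_le_div_iff_of_pos_right hν0]; exact hx12
  have hBB' : B ≤ B' := by
    rw [hB, hB', div_le_div_iff_of_pos_right hν0]; exact hy12
  have hWH : (A' - A) * (B' - B) = α * m := by
    have e1 : A' - A = (x₂ - x₁) / ν := by rw [hA, hA', div_sub_div_same]
    have e2 : B' - B = (y₂ - y₁) / ν := by rw [hB, hB', div_sub_div_same]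
    rw [e1, e2, div_mul_div_comm, harea, hν]
    field_simp
  -- membership of T unpacked
  have hTmem : ∀ i ∈ T, i < m ∧ A ≤ (i:ℝ) ∧ (i:ℝ) ≤ A' ∧ B ≤ (yc i : ℝ) ∧ (yc i : ℝ) ≤ B' := by
    intro i hi
    rw [hT, Finset.mem_filter, Finset.mem_range] at hi
    exact ⟨hi.1, hi.2⟩
  -- the pairwise separation fact
  have pairkey : ∀ i ∈ T, ∀ i' ∈ T, i ≠ i' →
      (m:ℝ) ≤ 3 * |(i:ℝ) - (i':ℝ)| * (B' - B) := by
    intro i hi i' hi' hne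
    obtain ⟨him, hiA, hiA', hiB, hiB'⟩ := hTmem i hi
    obtain ⟨him2, hiA2, hiA'2, hiB2, hiB'2⟩ := hTmem i' hi'
    set a : ℤ := (i:ℤ) - (i':ℤ) with ha
    set b : ℤ := (yc i : ℤ) - (yc i' : ℤ) with hb
    have hmodlt : ∀ j : ℕ, yc j < m := fun j => Nat.mod_lt _ (by omega)
    have hdvd : (fib k : ℤ) ∣ (b - a * fib (k-1)) := by
      have base : ∀ j : ℕ, (fib k : ℤ) ∣ ((yc j : ℤ) - (j:ℤ) * fib (k-1)) := by
        intro j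
        rw [hyc]
        have : ((((j * fib (k - 1)) % m : ℕ)) : ℤ) = ((j:ℤ) * fib (k-1)) % (m:ℤ) := by
          push_cast
          rfl
        rw [this, hmfib, Int.emod_def]
        exact ⟨-((j:ℤ) * fib (k-1) / fib k), by push_cast; ring⟩
      have h1 := base i
      have h2 := base i'
      have : b - a * fib (k-1) =
          ((yc i : ℤ) - (i:ℤ) * fib (k-1)) - ((yc i' : ℤ) - (i':ℤ) * fib (k-1)) := by
        rw [ha, hb]; ring
      rw [this]
      exact dvd_sub h1 h2
    have ha1 : a ≠ 0 := by
      rw [ha]; intro h; apply hne; omega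
    have ha2 : |a| < fib k := by
      rw [← hmfib, ha, abs_lt]; constructor <;> omega
    have hb2 : |b| < fib k := by
      have h1 := hmodlt i
      have h2 := hmodlt i'
      rw [← hmfib, hb, abs_lt]; constructor <;> omega
    have hgap := gap k a b hdvd ha1 ha2 hb2
    have hgapR : (m:ℝ) ≤ 3 * |(i:ℝ) - (i':ℝ)| * |(yc i : ℝ) - (yc i' : ℝ)| := by
      have hR : ((fib k : ℕ) : ℝ) ≤ 3 * |((a:ℤ):ℝ)| * |((b:ℤ):ℝ)| := by
        exact_mod_cast hgap
      have ea : ((a:ℤ):ℝ) = (i:ℝ) - (i':ℝ) := by rw [ha]; push_cast; ring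
      have eb : ((b:ℤ):ℝ) = (yc i : ℝ) - (yc i' : ℝ) := by rw [hb]; push_cast; ring
      rw [ea, eb] at hR
      rw [hmfib]
      exact hR
    have hble : |(yc i : ℝ) - (yc i' : ℝ)| ≤ B' - B :=
      abs_sub_le_iff.mpr ⟨by linarith, by linarith⟩
    calc (m:ℝ) ≤ 3 * |(i:ℝ) - (i':ℝ)| * |(yc i : ℝ) - (yc i' : ℝ)| := hgapR
      _ ≤ 3 * |(i:ℝ) - (i':ℝ)| * (B' - B) :=
        mul_le_mul_of_nonneg_left hble (by positivity)
  constructor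
  · -- LOWER BOUND
    rw [hcount]
    rcases Nat.eq_zero_or_pos ⌊α / (4:ℝ)⌋₊ with hq0 | hq1
    · rw [hq0]; exact Nat.zero_le _
    set q : ℕ := ⌊α / (4:ℝ)⌋₊ with hqdef
    have hqR : (0:ℝ) < q := by exact_mod_cast hq1
    have hq4 : (4:ℝ) * q ≤ α := by
      have h := Nat.floor_le (show (0:ℝ) ≤ α/4 by positivity)
      rw [← hqdef] at h
      linarith
    set W : ℝ := A' - A with hW
    set H : ℝ := B' - B with hH
    have hW0 : 0 ≤ W := by rw [hW]; linarith
    have hH0 : 0 ≤ H := by rw [hH]; linarith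
    have hWHpos : 0 < W * H := by
      rw [hW, hH, hWH]; positivity
    have hHpos : 0 < H := by
      rcases hH0.lt_or_eq with h | h
      · exact h
      · rw [← h, mul_zero] at hWHpos; exact absurd hWHpos (lt_irrefl 0)
    have hWpos : 0 < W := by
      rcases hW0.lt_or_eq with h | h
      · exact h
      · rw [← h, zero_mul] at hWHpos; exact absurd hWHpos (lt_irrefl 0)
    have hWm : W ≤ (m:ℝ) - 1 := by rw [hW]; linarith
    have hHm : H ≤ (m:ℝ) - 1 := by rw [hH]; linarith
    have hWHα : W * H = α * m := by rw [hW, hH]; exact hWH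
    have hαW : α < W := by
      have h1 : α * m ≤ W * ((m:ℝ) - 1) := by
        rw [← hWHα]; exact mul_le_mul_of_nonneg_left hHm hW0
      have h2 : α * m < W * m := by linarith
      exact lt_of_mul_lt_mul_right h2 hmR.le
    set U : ℝ := W / q - 1 with hU
    have hWq : W / q ≤ W := by
      apply div_le_self hW0
      exact_mod_cast hq1
    have hU3 : 3 ≤ U := by
      rw [hU]
      have h1 : (4:ℝ) ≤ W / q := by
        rw [le_div_iff₀ hqR]
        linarith
      linarith
    have hU0 : 0 ≤ U := by linarith
    have hUm : U < (m:ℝ) := by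
      have : U ≤ W - 1 := by rw [hU]; linarith
      linarith
    -- pick the scale
    set u : ℕ := ⌊U⌋₊ with hu
    have hu1 : 1 ≤ u := by
      rw [hu, Nat.le_floor_iff hU0]
      push_cast; linarith
    have hufib : u < fib k := by
      rw [← hmfib]
      have h1 : (u:ℝ) ≤ U := by rw [hu]; exact Nat.floor_le hU0
      have : (u:ℝ) < m := by linarith
      exact_mod_cast this
    obtain ⟨j, hj1, hjk, hjle, hjlt⟩ := fibInterval k u hu1 hufib
    obtain ⟨i, rfl⟩ : ∃ i, j = i + 1 := ⟨j - 1, by omega⟩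
    obtain ⟨t, hkit⟩ : ∃ t, k = i + t + 2 := ⟨k - (i + 2), by omega⟩
    have ht1 : 1 ≤ t := by omega
    have hUfib : (fib (i+2) : ℝ) ≤ U := by
      have h1 : (fib (i+2) : ℝ) ≤ u := by exact_mod_cast hjle
      have h2 : (u:ℝ) ≤ U := by rw [hu]; exact Nat.floor_le hU0
      linarith
    have hUfib' : U < (fib (i+3) : ℝ) := by
      have h1 : U < (u:ℝ) + 1 := by rw [hu]; exact Nat.lt_floor_add_one U
      have h2 : (u:ℝ) + 1 ≤ fib (i+3) := by
        have : u + 1 ≤ fib (i+3) := hjlt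
        exact_mod_cast this
      linarith
    -- H ≥ fib (t+2)
    have hfibprod : (fib (i+3) : ℝ) * fib (t+2) ≤ 3 * m := by
      have h1 : fib (i+3) * fib (t+2) ≤ fib (k+2) := by
        have h := Nat.fib_add (i+2) (t+1)
        rw [show i+2+(t+1)+1 = k+2 by omega] at h
        calc fib (i+3) * fib (t+2) ≤ fib (i+2) * fib (t+1) + fib (i+3) * fib (t+2) :=
              Nat.le_add_left _ _
          _ = fib (k+2) := h.symm
      have h2 : fib (k+2) ≤ 3 * fib k := by
        have e1 : fib (k+2) = fib k + fib (k+1) := Nat.fib_add_two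
        have e2 : fib (k+1) = fib (k-1) + fib k := by
          rw [show k + 1 = (k-1) + 2 by omega, Nat.fib_add_two,
            show k - 1 + 1 = k by omega]
        have e3 : fib (k-1) ≤ fib k := Nat.fib_mono (by omega)
        omega
      have : fib (i+3) * fib (t+2) ≤ 3 * fib k := le_trans h1 h2
      rw [← hmfib] at this
      exact_mod_cast this
    have hUH : 3 * (m:ℝ) + 1 ≤ U * H := by
      have h1 : U * H = W * H / q - H := by
        rw [hU]; ring
      have hqm : (4:ℝ) * q * m ≤ α * m := mul_le_mul_of_nonneg_right hq4 hmR.le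
      have h2 : (4:ℝ) * m ≤ W * H / q := by
        rw [hWHα, le_div_iff₀ hqR]
        linarith
      rw [h1]
      linarith
    have hHfib : (fib (t+2) : ℝ) ≤ H := by
      by_contra hcon
      push_neg at hcon
      have h1 : U * H ≤ (fib (i+3) : ℝ) * H :=
        mul_le_mul_of_nonneg_right hUfib'.le hH0
      have h2 : (fib (i+3) : ℝ) * H < (fib (i+3) : ℝ) * fib (t+2) := by
        apply mul_lt_mul_of_pos_left hcon
        have : 0 < fib (i+3) := Nat.fib_pos.mpr (by omega)
        exact_mod_cast this
      linarith
    -- one point in each strip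
    have hstrip : ∀ r : ℕ, r < q → ∃ p : ℕ, p ∈ T ∧
        A + r * (W/q) ≤ (p:ℝ) ∧ (p:ℝ) ≤ A + r * (W/q) + U := by
      intro r hr
      obtain ⟨x, y, hdvd, hx1', hx2', hy1', hy2'⟩ :=
        cover k i t hkit (A + r * (W/q)) B U H hUfib hHfib
      have hWq0 : 0 ≤ W / q := by positivity
      have hxA : A ≤ (x:ℝ) := by
        have : (0:ℝ) ≤ r * (W/q) := by positivity
        linarith
      have hx0 : 0 ≤ x := by
        have : (0:ℝ) ≤ (x:ℝ) := by linarith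
        exact_mod_cast this
      have hxA' : (x:ℝ) ≤ A' - 1 := by
        have hrq : (r:ℝ) ≤ (q:ℝ) - 1 := by
          have : (r:ℝ) + 1 ≤ q := by exact_mod_cast hr
          linarith
        have h1 : (r:ℝ) * (W/q) ≤ ((q:ℝ) - 1) * (W/q) :=
          mul_le_mul_of_nonneg_right hrq hWq0
        have h2 : (q:ℝ) * (W/q) = W := by field_simp
        have h3 : (x:ℝ) ≤ A + ((q:ℝ) - 1) * (W/q) + U := by linarith
        rw [hU] at h3
        have h4 : (x:ℝ) ≤ A + W - 1 := by linarith [h3, h2]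
        rw [hW] at h4
        linarith
      have hxm : x < (m:ℤ) := by
        have : (x:ℝ) < m := by linarith
        exact_mod_cast this
      have hy0 : 0 ≤ y := by
        have : (0:ℝ) ≤ (y:ℝ) := by linarith
        exact_mod_cast this
      have hyB' : (y:ℝ) ≤ B' := by
        rw [hH] at hy2'; linarith
      have hym : y < (m:ℤ) := by
        have : (y:ℝ) < m := by
          have : B' < m := by linarith
          linarith
        exact_mod_cast this
      have hxcast : ((x.toNat : ℕ) : ℝ) = (x:ℝ) := by
        have : ((x.toNat : ℕ) : ℤ) = x := Int.toNat_of_nonneg hx0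
        exact_mod_cast this
      have hymod : (yc x.toNat : ℤ) = y := by
        rw [hyc]
        have hxf : ((x.toNat * fib (k-1) % m : ℕ) : ℤ)
            = ((x * fib (k-1)) % (m:ℤ)) := by
          push_cast [Int.toNat_of_nonneg hx0]
          rfl
        simp only
        rw [hxf]
        have hmeq : (x * (fib (k-1):ℤ)) % (m:ℤ) = y % (m:ℤ) := by
          have : ((m:ℤ)) ∣ y - x * (fib (k-1):ℤ) := by
            rw [hmfib]; exact_mod_cast hdvd
          exact Int.modEq_iff_dvd.mpr (by exact_mod_cast this)
        rw [hmeq, Int.emod_eq_of_lt hy0 hym]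
      refine ⟨x.toNat, ?_, by rw [hxcast]; exact hx1', by rw [hxcast]; exact hx2'⟩
      rw [hT, Finset.mem_filter, Finset.mem_range]
      have hycast : ((yc x.toNat : ℕ) : ℝ) = (y:ℝ) := by exact_mod_cast hymod
      refine ⟨by omega, by rw [hxcast]; exact hxA, by rw [hxcast]; linarith,
        by rw [hycast]; exact hy1', by rw [hycast]; exact hyB'⟩
    -- choose points and conclude
    choose! F hF1 hF2 hF3 using hstrip
    have hmono : ∀ r r' : ℕ, r < r' → r' < q → (F r : ℝ) < (F r' : ℝ) := by
      intro r r' hrr hr'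
      have hWqU : U < W / q := by rw [hU]; linarith
      have h1 := hF3 r (by omega)
      have h2 := hF2 r' hr'
      have hle : (r:ℝ) + 1 ≤ (r':ℝ) := by exact_mod_cast hrr
      have hWq0 : 0 ≤ W / q := by positivity
      have hmm : ((r:ℝ)+1) * (W/q) ≤ (r':ℝ) * (W/q) :=
        mul_le_mul_of_nonneg_right hle hWq0
      have : A + (r:ℝ) * (W/q) + U < A + (r':ℝ) * (W/q) := by linarith
      linarith
    have hinj : Set.InjOn F (Finset.range q) := by
      intro r hr r' hr' heq
      rw [Finset.coe_range, Set.mem_Iio] at hr hr'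
      rcases lt_trichotomy r r' with h | h | h
      · exfalso; have := hmono r r' h hr'; rw [heq] at this; exact lt_irrefl _ this
      · exact h
      · exfalso; have := hmono r' r h hr; rw [heq] at this; exact lt_irrefl _ this
    have hcard : (Finset.range q).card ≤ T.card := by
      apply Finset.card_le_card_of_injOn F
      · intro r hrr
        rw [Finset.mem_coe, Finset.mem_range] at hrr
        exact hF1 r hrr
      · exact hinj
    rw [Finset.card_range] at hcard
    exact hcard
  · -- UPPER BOUND
    rw [hcount]
    have h6 : α / (1/6 : ℝ) = 6 * α := by ring
    rcases lt_or_ge α (1/3 : ℝ) with hsm | hlg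
    · -- at most one point
      have hone : T.card ≤ 1 := by
        rw [Finset.card_le_one]
        intro i hi i' hi'
        by_contra hne
        have hk1 := pairkey i hi i' hi' hne
        obtain ⟨_, hiA, hiA', _, _⟩ := hTmem i hi
        obtain ⟨_, hiA2, hiA'2, _, _⟩ := hTmem i' hi'
        have habs : |(i:ℝ) - (i':ℝ)| ≤ A' - A :=
          abs_sub_le_iff.mpr ⟨by linarith, by linarith⟩
        have hH0 : 0 ≤ B' - B := by linarith
        have : (m:ℝ) ≤ 3 * (A' - A) * (B' - B) := by
          calc (m:ℝ) ≤ 3 * |(i:ℝ) - (i':ℝ)| * (B' - B) := hk1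
            _ ≤ 3 * (A' - A) * (B' - B) := by
                apply mul_le_mul_of_nonneg_right _ hH0
                linarith
        rw [show 3 * (A' - A) * (B' - B) = 3 * ((A' - A) * (B' - B)) by ring, hWH] at this
        have hx3 : α * (m:ℝ) < 1/3 * m := mul_lt_mul_of_pos_right hsm hmR
        linarith
      have : 1 ≤ ⌈α / (1/6 : ℝ)⌉₊ := by
        rw [Nat.one_le_ceil_iff]
        positivity
      omega
    · -- injection into range (⌊3α⌋ + 1)
      set ψ : ℕ → ℕ := fun i => ⌊((i:ℝ) - A) * (3 * (B' - B)) / m⌋₊ with hψ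
      have hH0 : 0 ≤ B' - B := by linarith
      have hcard : T.card ≤ ⌊3*α⌋₊ + 1 := by
        have := Finset.card_le_card_of_injOn ψ (s := T)
          (t := Finset.range (⌊3*α⌋₊ + 1)) ?_ ?_
        · rw [Finset.card_range] at this; exact this
        · intro i hi
          obtain ⟨him, hiA, hiA', _, _⟩ := hTmem i hi
          rw [Finset.mem_coe, Finset.mem_range, Nat.lt_succ_iff, hψ]
          apply Nat.floor_le_floor
          rw [div_le_iff₀ hmR]
          have h1 : ((i:ℝ) - A) * (3 * (B' - B)) ≤ (A' - A) * (3 * (B' - B)) := by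
            apply mul_le_mul_of_nonneg_right _ (by linarith)
            linarith
          calc ((i:ℝ) - A) * (3 * (B' - B)) ≤ (A' - A) * (3 * (B' - B)) := h1
            _ = 3 * ((A' - A) * (B' - B)) := by ring
            _ = 3 * (α * m) := by rw [hWH]
            _ = 3 * α * m := by ring
        · intro i hi i' hi' heq
          by_contra hne
          have hk1 := pairkey i hi i' hi' hne
          obtain ⟨_, hiA, _, _, _⟩ := hTmem i hi
          obtain ⟨_, hiA2, _, _, _⟩ := hTmem i' hi'
          set u1 : ℝ := ((i:ℝ) - A) * (3 * (B' - B)) / m with hu1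
          set u2 : ℝ := ((i':ℝ) - A) * (3 * (B' - B)) / m with hu2
          have hu10 : 0 ≤ u1 := by
            rw [hu1]; apply div_nonneg _ hmR.le; apply mul_nonneg (by linarith) (by linarith)
          have hu20 : 0 ≤ u2 := by
            rw [hu2]; apply div_nonneg _ hmR.le; apply mul_nonneg (by linarith) (by linarith)
          have hfl : ⌊u1⌋₊ = ⌊u2⌋₊ := heq
          have hdiff : |u1 - u2| < 1 := by
            rcases le_or_gt u1 u2 with h | h
            · rw [abs_sub_comm, abs_of_nonneg (by linarith)]
              have := Nat.lt_floor_add_one u2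
              have h2 := Nat.floor_le hu10
              rw [← hfl] at this
              linarith
            · rw [abs_of_nonneg (by linarith)]
              have := Nat.lt_floor_add_one u1
              have h2 := Nat.floor_le hu20
              rw [hfl] at this
              linarith
          have hdiffeq : |u1 - u2| = |(i:ℝ) - (i':ℝ)| * (3 * (B' - B)) / m := by
            have e : u1 - u2 = (((i:ℝ) - (i':ℝ)) * (3 * (B' - B))) / m := by
              rw [hu1, hu2]; ring
            rw [e, abs_div, abs_of_nonneg hmR.le, abs_mul,
              abs_of_nonneg (show (0:ℝ) ≤ 3 * (B' - B) by linarith)]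
          rw [hdiffeq, div_lt_iff₀ hmR, one_mul] at hdiff
          have : (m:ℝ) ≤ 3 * |(i:ℝ) - (i':ℝ)| * (B' - B) := hk1
          linarith
      have hfinal : (T.card : ℝ) ≤ (⌈α / (1/6 : ℝ)⌉₊ : ℝ) := by
        have h1 : (T.card : ℝ) ≤ (⌊3*α⌋₊ : ℝ) + 1 := by exact_mod_cast hcard
        have h2 : (⌊3*α⌋₊ : ℝ) ≤ 3*α := Nat.floor_le (by positivity)
        have h3 : 6 * α ≤ (⌈α / (1/6 : ℝ)⌉₊ : ℝ) := by
          rw [← h6]; exact Nat.le_ceil _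
        linarith
      exact_mod_cast hfinal
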